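/- Let Q be a symmetric positive semidefinite n×n real matrix, c ∈ ℝⁿ, and q(x) = xᵀQx + cᵀx. Let g(x) = 2Qx + c. Fix ε with 0 < ε < 1/(2·λ_max(Q)), where λ_max(Q) is the largest eigenvalue of Q. Given z ∈ ℝⁿ with z ≥ 0, define A(z) = {i : z_i ≤ ε·g_i(z)} and let y be defined by y_i = 0 for i ∈ A(z) and y_i = z_i otherwise. Then q(y) − q(z) ≤ −(1/(2ε))·‖y − z‖². -/

import Mathlib

open Matrix Finset

lemma quadform_le_iSup {n : ℕ} (Q : Matrix (Fin n) (Fin n) ℝ) (hQ : Q.IsHermitian)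
    (lam : ℝ) (hlam : ∀ i, hQ.eigenvalues i ≤ lam) (x : Fin n → ℝ) :
    x ⬝ᵥ (Q *ᵥ x) ≤ lam * ∑ i, x i ^ 2 := by
  classical
  set U : Matrix (Fin n) (Fin n) ℝ := (hQ.eigenvectorUnitary : Matrix (Fin n) (Fin n) ℝ) with hU
  set w : Fin n → ℝ := Uᵀ *ᵥ x with hw
  have hstar : star U = Uᵀ := by
    rw [Matrix.star_eq_conjTranspose, Matrix.conjTranspose_eq_transpose_of_trivial]
  have hUUt : U * Uᵀ = 1 := by
    have := (Matrix.mem_unitaryGroup_iff).mp hQ.eigenvectorUnitary.2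
    rwa [hstar] at this
  have key : ∀ v : Fin n → ℝ, x ⬝ᵥ (U *ᵥ v) = w ⬝ᵥ v := by
    intro v
    rw [Matrix.dotProduct_mulVec, hw, Matrix.mulVec_transpose]
  have h1 : x ⬝ᵥ (Q *ᵥ x) = ∑ i, hQ.eigenvalues i * w i ^ 2 := by
    conv_lhs => rw [hQ.spectral_theorem, Unitary.conjStarAlgAut_apply, ← hU, hstar]
    rw [← Matrix.mulVec_mulVec, ← Matrix.mulVec_mulVec, key, ← hw]
    simp [dotProduct, Matrix.mulVec_diagonal, Function.comp]
    ring_nf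
    exact Finset.sum_congr rfl fun i _ => by ring
  have h2 : ∑ i, x i ^ 2 = ∑ i, w i ^ 2 := by
    have : x ⬝ᵥ x = w ⬝ᵥ w := by
      calc x ⬝ᵥ x = x ⬝ᵥ ((U * Uᵀ) *ᵥ x) := by rw [hUUt, Matrix.one_mulVec]
        _ = w ⬝ᵥ w := by rw [← Matrix.mulVec_mulVec, key, hw]
    simpa [dotProduct, sq] using this
  rw [h1, h2, Finset.mul_sum]
  exact Finset.sum_le_sum fun i _ => mul_le_mul_of_nonneg_right (hlam i) (sq_nonneg _)

/-- Sufficient decrease obtained by fixing the estimated active variables to zero. -/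
theorem stmt_0 {n : ℕ} (hn : 0 < n) (Q : Matrix (Fin n) (Fin n) ℝ) (hQ : Q.PosSemidef)
    (c : Fin n → ℝ)
    (q : (Fin n → ℝ) → ℝ) (hq : ∀ x, q x = x ⬝ᵥ (Q *ᵥ x) + c ⬝ᵥ x)
    (g : (Fin n → ℝ) → (Fin n → ℝ)) (hg : ∀ x, g x = (2 : ℝ) • (Q *ᵥ x) + c)
    (ε : ℝ) (hε : 0 < ε) (hεlt : ε < 1 / (2 * ⨆ i, hQ.1.eigenvalues i))
    (z : Fin n → ℝ) (hz : ∀ i, 0 ≤ z i)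
    (y : Fin n → ℝ) (hy : ∀ i, y i = if z i ≤ ε * g z i then 0 else z i) :
    q y - q z ≤ -(1 / (2 * ε)) * ∑ i, (y i - z i) ^ 2 := by
  classical
  haveI : Nonempty (Fin n) := ⟨⟨0, hn⟩⟩
  set d : Fin n → ℝ := y - z with hd
  have hdi : ∀ i, d i = y i - z i := fun i => rfl
  have hQsymm : Qᵀ = Q := by
    rw [← Matrix.conjTranspose_eq_transpose_of_trivial]; exact hQ.1
  have symm : ∀ u v : Fin n → ℝ, u ⬝ᵥ (Q *ᵥ v) = v ⬝ᵥ (Q *ᵥ u) := by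
    intro u v
    rw [Matrix.dotProduct_mulVec, ← Matrix.mulVec_transpose, hQsymm, dotProduct_comm]
  -- expansion
  have hy' : y = z + d := by funext i; simp [hdi]
  have expand : q y - q z = d ⬝ᵥ (Q *ᵥ d) + (g z) ⬝ᵥ d := by
    rw [hq, hq, hg, hy']
    simp only [Matrix.mulVec_add, dotProduct_add, add_dotProduct,
      smul_dotProduct, smul_eq_mul]
    rw [symm z d, dotProduct_comm (Q *ᵥ z) d]
    ring
  -- linear term bound
  have hS : ∀ i, d i = if z i ≤ ε * g z i then -z i else 0 := by
    intro i
    rw [hdi, hy i]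
    split <;> ring
  have lin : (g z) ⬝ᵥ d ≤ -(1/ε) * ∑ i, d i ^ 2 := by
    rw [dotProduct, Finset.mul_sum]
    apply Finset.sum_le_sum
    intro i _
    rw [hS i]
    by_cases h : z i ≤ ε * g z i
    · rw [if_pos h]
      have h2 : z i * z i ≤ ε * g z i * z i :=
        mul_le_mul_of_nonneg_right h (hz i)
      have hgz : z i * z i / ε ≤ g z i * z i := by
        rw [div_le_iff₀ hε]
        nlinarith
      have : g z i * -z i ≤ -(1 / ε) * (-z i) ^ 2 := by
        have : -(1 / ε) * (-z i) ^ 2 = -(z i * z i / ε) := by ring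
        rw [this]
        linarith
      linarith
    · rw [if_neg h]; simp
  -- eigenvalue bound
  set L : ℝ := ⨆ i, hQ.1.eigenvalues i with hL
  have hle : ∀ i, hQ.1.eigenvalues i ≤ L :=
    fun i => le_ciSup (Set.Finite.bddAbove (Set.finite_range _)) i
  have hL0 : 0 ≤ L := le_trans (hQ.eigenvalues_nonneg ⟨0, hn⟩) (hle _)
  have hLpos : 0 < L := by
    rcases hL0.lt_or_eq with h | h
    · exact h
    · exfalso; rw [← h] at hεlt; simp at hεlt; linarith
  have hLlt : L ≤ 1 / (2 * ε) := by
    rw [lt_div_iff₀ (by positivity)] at hεlt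
    rw [le_div_iff₀ (by positivity)]
    nlinarith
  have quad : d ⬝ᵥ (Q *ᵥ d) ≤ (1 / (2 * ε)) * ∑ i, d i ^ 2 :=
    quadform_le_iSup Q hQ.1 _ (fun i => le_trans (hle i) hLlt) d
  have hsum : ∑ i, (y i - z i) ^ 2 = ∑ i, d i ^ 2 := by
    apply Finset.sum_congr rfl; intro i _; rw [hdi]
  rw [expand, hsum]
  have hSnn : 0 ≤ ∑ i, d i ^ 2 := Finset.sum_nonneg fun i _ => sq_nonneg _
  have : (1 / (2 * ε)) * ∑ i, d i ^ 2 + -(1/ε) * ∑ i, d i ^ 2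
      = -(1 / (2 * ε)) * ∑ i, d i ^ 2 := by
    field_simp; ring
  linarith [quad, lin]
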